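/- arXiv:1703.01458 — 2 statements merged into one kernel-verified Lean document; each statement's English description precedes it below -/
import Mathlib

section
/- Let φ be a strictly increasing, strictly convex function in Φ₁ (convex, increasing, φ(0)=0, φ(1)=1) and p ∈ (1,n). If Ω and Ω̃ are bounded convex domains containing the origin such that C_{p,φ}(Ω, Ω₁)/C_p(Ω) = C_{p,φ}(Ω̃, Ω₁)/C_p(Ω̃) for every bounded convex domain Ω₁ containing the origin, then Ω = Ω̃. -/
open MeasureTheory Set
open scoped Pointwise

/-- The support function `h_K(u) = sup_{x ∈ K} ⟨x, u⟩` of a set `K ⊆ ℝⁿ`. -/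
noncomputable def suppFn (n : ℕ) (K : Set (EuclideanSpace ℝ (Fin n)))
    (u : EuclideanSpace ℝ (Fin n)) : ℝ :=
  sSup ((fun x => (inner ℝ x u : ℝ)) '' K)

/-- A bounded open convex domain containing the origin. -/
def IsConvexDomain (n : ℕ) (Ω : Set (EuclideanSpace ℝ (Fin n))) : Prop :=
  IsOpen Ω ∧ Convex ℝ Ω ∧ Bornology.IsBounded Ω ∧ (0 : EuclideanSpace ℝ (Fin n)) ∈ Ω

/-- The Orlicz `L_φ` mixed `p`-capacity
`C_{p,φ}(Ω,Ω₁) = (p−1)/(n−p) ∫ φ(h_{Ω₁}/h_Ω) h_Ω dμ_p(Ω,·)`, where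
`μp Ω` is the `p`-capacitary measure of `Ω`. -/
noncomputable def orliczMixedCap (n : ℕ) (p : ℝ) (φ : ℝ → ℝ)
    (μp : Set (EuclideanSpace ℝ (Fin n)) →
      Measure (Metric.sphere (0 : EuclideanSpace ℝ (Fin n)) 1))
    (Ω Ω₁ : Set (EuclideanSpace ℝ (Fin n))) : ℝ :=
  (p - 1) / ((n : ℝ) - p) *
    ∫ u, φ (suppFn n Ω₁ ↑u / suppFn n Ω ↑u) * suppFn n Ω ↑u ∂(μp Ω)

/-- The support function of a bounded convex domain containing the origin is positive
on the unit sphere. -/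
lemma suppFn_pos (n : ℕ) (Ω : Set (EuclideanSpace ℝ (Fin n)))
    (hΩ : IsConvexDomain n Ω) (u : EuclideanSpace ℝ (Fin n)) (hu : ‖u‖ = 1) :
    0 < suppFn n Ω u := by
  obtain ⟨hopen, -, hbdd, h0⟩ := hΩ
  obtain ⟨ε, hε, hball⟩ := Metric.isOpen_iff.1 hopen 0 h0
  obtain ⟨M, hM⟩ := hbdd.exists_norm_le
  have hmem : (ε / 2) • u ∈ Ω := by
    apply hball
    rw [mem_ball_zero_iff, norm_smul, hu, mul_one]
    rw [Real.norm_eq_abs, abs_of_pos (half_pos hε)]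
    exact half_lt_self hε
  have hbdda : BddAbove ((fun x => (inner ℝ x u : ℝ)) '' Ω) := by
    refine ⟨M, ?_⟩
    rintro - ⟨x, hx, rfl⟩
    calc (inner ℝ x u : ℝ) ≤ ‖x‖ * ‖u‖ := real_inner_le_norm x u
      _ ≤ M := by rw [hu, mul_one]; exact hM x hx
  have hle : (ε / 2 : ℝ) ≤ suppFn n Ω u := by
    have : (inner ℝ ((ε / 2) • u) u : ℝ) = ε / 2 := by
      rw [real_inner_smul_left, real_inner_self_eq_norm_sq, hu]; ring
    calc (ε / 2 : ℝ) = (inner ℝ ((ε / 2) • u) u : ℝ) := this.symm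
      _ ≤ suppFn n Ω u := le_csSup hbdda ⟨_, hmem, rfl⟩
  linarith [half_pos hε]

/-- Self mixed capacity equals the capacity. -/
lemma orliczMixedCap_self (n : ℕ) (p : ℝ) (φ : ℝ → ℝ) (hφ1 : φ 1 = 1)
    (μp : Set (EuclideanSpace ℝ (Fin n)) →
      Measure (Metric.sphere (0 : EuclideanSpace ℝ (Fin n)) 1))
    (Cp : Set (EuclideanSpace ℝ (Fin n)) → ℝ)
    (hPoincare : ∀ Ω, IsConvexDomain n Ω →
      (p - 1) / ((n : ℝ) - p) * ∫ u, suppFn n Ω ↑u ∂(μp Ω) = Cp Ω)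
    (Ω : Set (EuclideanSpace ℝ (Fin n))) (hΩ : IsConvexDomain n Ω) :
    orliczMixedCap n p φ μp Ω Ω = Cp Ω := by
  have hfun : (fun u : Metric.sphere (0 : EuclideanSpace ℝ (Fin n)) 1 =>
      φ (suppFn n Ω ↑u / suppFn n Ω ↑u) * suppFn n Ω ↑u) =
      (fun u : Metric.sphere (0 : EuclideanSpace ℝ (Fin n)) 1 => suppFn n Ω ↑u) := by
    funext u
    have hu : ‖(u : EuclideanSpace ℝ (Fin n))‖ = 1 := by
      have := u.2
      simpa [mem_sphere_iff_norm] using this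
    have hpos := suppFn_pos n Ω hΩ u hu
    rw [div_self hpos.ne', hφ1, one_mul]
  rw [orliczMixedCap, hfun, hPoincare Ω hΩ]

/-- if `φ ∈ Φ₁` is strictly increasing and strictly convex and two bounded convex
domains `Ω, Ω'` containing the origin satisfy
`C_{p,φ}(Ω,Ω₁)/C_p(Ω) = C_{p,φ}(Ω',Ω₁)/C_p(Ω')` for all such domains `Ω₁`, then `Ω = Ω'`.
Here the `p`-capacity `Cp` and the `p`-capacitary measures `μp` are linked by the Poincaré
formula, the Orlicz–Minkowski inequality with its equality characterization, and the
homogeneity of the `p`-capacity. -/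
theorem orlicz_mixed_capacity_unique (n : ℕ) (p : ℝ) (hp : 1 < p) (hpn : p < n)
    (φ : ℝ → ℝ) (hφm : StrictMonoOn φ (Ici 0)) (hφconv : StrictConvexOn ℝ (Ici 0) φ)
    (hφ0 : φ 0 = 0) (hφ1 : φ 1 = 1)
    (μp : Set (EuclideanSpace ℝ (Fin n)) →
      Measure (Metric.sphere (0 : EuclideanSpace ℝ (Fin n)) 1))
    (Cp : Set (EuclideanSpace ℝ (Fin n)) → ℝ)
    (hCppos : ∀ Ω, IsConvexDomain n Ω → 0 < Cp Ω)
    (hPoincare : ∀ Ω, IsConvexDomain n Ω →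
      (p - 1) / ((n : ℝ) - p) * ∫ u, suppFn n Ω ↑u ∂(μp Ω) = Cp Ω)
    (hMinkowski : ∀ Ω Ω₁, IsConvexDomain n Ω → IsConvexDomain n Ω₁ →
      orliczMixedCap n p φ μp Ω Ω₁ ≥ Cp Ω * φ ((Cp Ω₁ / Cp Ω) ^ (1 / ((n : ℝ) - p))) ∧
      (orliczMixedCap n p φ μp Ω Ω₁ = Cp Ω * φ ((Cp Ω₁ / Cp Ω) ^ (1 / ((n : ℝ) - p))) →
        ∃ c : ℝ, 0 < c ∧ Ω₁ = c • Ω))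
    (hHom : ∀ Ω, IsConvexDomain n Ω → ∀ c : ℝ, 0 < c →
      Cp (c • Ω) = c ^ ((n : ℝ) - p) * Cp Ω)
    (Ω Ω' : Set (EuclideanSpace ℝ (Fin n)))
    (hΩ : IsConvexDomain n Ω) (hΩ' : IsConvexDomain n Ω')
    (heq : ∀ Ω₁, IsConvexDomain n Ω₁ →
      orliczMixedCap n p φ μp Ω Ω₁ / Cp Ω = orliczMixedCap n p φ μp Ω' Ω₁ / Cp Ω') :
    Ω = Ω' := by
  have ha : 0 < Cp Ω := hCppos Ω hΩ
  have hb : 0 < Cp Ω' := hCppos Ω' hΩ'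
  have hnp : (0 : ℝ) < (n : ℝ) - p := by linarith
  have he : (0 : ℝ) < 1 / ((n : ℝ) - p) := by positivity
  -- the two key cross capacities
  have hselfΩ : orliczMixedCap n p φ μp Ω Ω = Cp Ω :=
    orliczMixedCap_self n p φ hφ1 μp Cp hPoincare Ω hΩ
  have hselfΩ' : orliczMixedCap n p φ μp Ω' Ω' = Cp Ω' :=
    orliczMixedCap_self n p φ hφ1 μp Cp hPoincare Ω' hΩ'
  have hcross1 : orliczMixedCap n p φ μp Ω' Ω = Cp Ω' := by
    have h := heq Ω hΩ
    rw [hselfΩ, div_self ha.ne'] at h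
    field_simp at h
    linarith
  have hcross2 : orliczMixedCap n p φ μp Ω Ω' = Cp Ω := by
    have h := heq Ω' hΩ'
    rw [hselfΩ', div_self hb.ne'] at h
    field_simp at h
    linarith
  -- from Minkowski: φ((Cp Ω / Cp Ω')^e) ≤ 1 and φ((Cp Ω' / Cp Ω)^e) ≤ 1
  have key : ∀ x : ℝ, 0 < x → φ (x ^ (1 / ((n : ℝ) - p))) ≤ 1 → x ≤ 1 := by
    intro x hx hφx
    by_contra hcon
    push_neg at hcon
    have h1 : (1 : ℝ) < x ^ (1 / ((n : ℝ) - p)) :=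
      Real.one_lt_rpow_iff_of_pos hx |>.2 (Or.inl ⟨hcon, he⟩)
    have := hφm (mem_Ici.2 (le_of_lt (zero_lt_one' ℝ))) (le_of_lt (lt_trans zero_lt_one h1)) h1
    rw [hφ1] at this
    linarith
  have h1 : Cp Ω / Cp Ω' ≤ 1 := by
    have hmk := (hMinkowski Ω' Ω hΩ' hΩ).1
    rw [hcross1] at hmk
    apply key _ (div_pos ha hb)
    have := (mul_le_mul_iff_right₀ hb).mp (by linarith [hmk] : Cp Ω' * φ ((Cp Ω / Cp Ω') ^ (1 / ((n : ℝ) - p))) ≤ Cp Ω' * 1)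
    linarith
  have h2 : Cp Ω' / Cp Ω ≤ 1 := by
    have hmk := (hMinkowski Ω Ω' hΩ hΩ').1
    rw [hcross2] at hmk
    apply key _ (div_pos hb ha)
    have := (mul_le_mul_iff_right₀ ha).mp (by linarith [hmk] : Cp Ω * φ ((Cp Ω' / Cp Ω) ^ (1 / ((n : ℝ) - p))) ≤ Cp Ω * 1)
    linarith
  have hab : Cp Ω = Cp Ω' := by
    have := (div_le_one hb).mp h1
    have := (div_le_one ha).mp h2
    linarith
  -- equality in Minkowski for the pair (Ω', Ω)
  have heqMink : orliczMixedCap n p φ μp Ω' Ω =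
      Cp Ω' * φ ((Cp Ω / Cp Ω') ^ (1 / ((n : ℝ) - p))) := by
    rw [hcross1, hab, div_self hb.ne', Real.one_rpow, hφ1, mul_one]
  obtain ⟨c, hc, hΩeq⟩ := (hMinkowski Ω' Ω hΩ' hΩ).2 heqMink
  -- homogeneity forces c = 1
  have hcap : Cp Ω = c ^ ((n : ℝ) - p) * Cp Ω' := by
    rw [hΩeq]; exact hHom Ω' hΩ' c hc
  have hc1 : c = 1 := by
    by_contra hne
    rcases lt_or_gt_of_ne hne with hlt | hgt
    · have : c ^ ((n : ℝ) - p) < 1 := Real.rpow_lt_one hc.le hlt hnp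
      nlinarith
    · have : (1 : ℝ) < c ^ ((n : ℝ) - p) :=
        Real.one_lt_rpow_iff_of_pos hc |>.2 (Or.inl ⟨hgt, hnp⟩)
      nlinarith
  rw [hΩeq, hc1, one_smul]
end

section
/- Let μ be a finite Borel measure on S^{n-1} whose support is not contained in any closed hemisphere (∫⟨η,θ⟩₊ dμ(θ) > 0 for all η ∈ S^{n-1}), and let φ : [0,∞) → [0,∞) be continuous and strictly increasing with φ(0)=0, φ(∞)=∞. Suppose (K_j) is a sequence of convex bodies with 0 ∈ K_j and ‖h_{K_j}‖_{φ,μ_j} = 1 for finite Borel measures μ_j on S^{n-1} converging weakly to μ. Then the maximal radii r_j = max_{u∈S^{n-1}} ρ_{K_j}(u) are uniformly bounded: there exists R > 0 with r_j ≤ R for all j. -/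
open MeasureTheory Set Filter

set_option maxHeartbeats 2000000

/-- The Orlicz norm `‖f‖_{φ,μ} = inf{λ > 0 : ∫ φ(f/λ) dμ ≤ φ(1) μ(S^{n-1})}`. -/
noncomputable def orliczNorm (n : ℕ) (φ : ℝ → ℝ)
    (μ : Measure (Metric.sphere (0 : EuclideanSpace ℝ (Fin n)) 1))
    (f : Metric.sphere (0 : EuclideanSpace ℝ (Fin n)) 1 → ℝ) : ℝ :=
  sInf {lam : ℝ | 0 < lam ∧ ∫ x, φ (f x / lam) ∂μ ≤ φ 1 * (μ univ).toReal}

lemma inner_le_suppFn {n : ℕ} {K : Set (EuclideanSpace ℝ (Fin n))} (hK : IsCompact K)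
    {x : EuclideanSpace ℝ (Fin n)} (hx : x ∈ K) (u : EuclideanSpace ℝ (Fin n)) :
    (inner ℝ x u : ℝ) ≤ suppFn n K u :=
  le_csSup ((hK.image (continuous_id.inner continuous_const)).bddAbove) ⟨x, hx, rfl⟩

lemma suppFn_nonneg {n : ℕ} {K : Set (EuclideanSpace ℝ (Fin n))} (hK : IsCompact K)
    (h0 : (0 : EuclideanSpace ℝ (Fin n)) ∈ K) (u : EuclideanSpace ℝ (Fin n)) :
    0 ≤ suppFn n K u := by
  have := inner_le_suppFn hK h0 u
  simpa using this

lemma suppFn_le_add {n : ℕ} {K : Set (EuclideanSpace ℝ (Fin n))} (hK : IsCompact K)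
    (h0 : (0 : EuclideanSpace ℝ (Fin n)) ∈ K) {R : ℝ} (hR : ∀ x ∈ K, ‖x‖ ≤ R)
    (u w : EuclideanSpace ℝ (Fin n)) :
    suppFn n K u ≤ suppFn n K w + R * ‖u - w‖ := by
  apply csSup_le (by exact ⟨_, ⟨0, h0, rfl⟩⟩)
  rintro y ⟨x, hx, rfl⟩
  have h1 : (inner ℝ x u : ℝ) = (inner ℝ x w : ℝ) + (inner ℝ x (u - w) : ℝ) := by
    rw [inner_sub_right]; ring
  have h2 : (inner ℝ x (u - w) : ℝ) ≤ ‖x‖ * ‖u - w‖ := real_inner_le_norm x (u - w)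
  have h3 : ‖x‖ * ‖u - w‖ ≤ R * ‖u - w‖ :=
    mul_le_mul_of_nonneg_right (hR x hx) (norm_nonneg _)
  have h4 := inner_le_suppFn hK hx w
  linarith

lemma suppFn_continuous {n : ℕ} {K : Set (EuclideanSpace ℝ (Fin n))} (hK : IsCompact K)
    (h0 : (0 : EuclideanSpace ℝ (Fin n)) ∈ K) : Continuous (suppFn n K) := by
  obtain ⟨R, hR⟩ : ∃ R, ∀ x ∈ K, ‖x‖ ≤ R := hK.isBounded.exists_norm_le
  set R' := max R 0 with hR'
  have hR'0 : 0 ≤ R' := le_max_right _ _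
  have hRb : ∀ x ∈ K, ‖x‖ ≤ R' := fun x hx => (hR x hx).trans (le_max_left _ _)
  have : LipschitzWith R'.toNNReal (suppFn n K) := by
    apply LipschitzWith.of_dist_le_mul
    intro u w
    rw [Real.dist_eq, abs_sub_le_iff]
    constructor
    · have := suppFn_le_add hK h0 hRb u w
      rw [dist_eq_norm]
      simp only [Real.coe_toNNReal _ hR'0]
      linarith
    · have := suppFn_le_add hK h0 hRb w u
      rw [dist_eq_norm, ← norm_neg, neg_sub]
      simp only [Real.coe_toNNReal _ hR'0]
      linarith
  exact this.continuous

lemma cont_integrable {n : ℕ} (ν : Measure (Metric.sphere (0 : EuclideanSpace ℝ (Fin n)) 1))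
    [IsFiniteMeasure ν] {g : Metric.sphere (0 : EuclideanSpace ℝ (Fin n)) 1 → ℝ}
    (hg : Continuous g) : Integrable g ν :=
  hg.integrable_of_hasCompactSupport (HasCompactSupport.of_compactSpace _)

/-- if `μ` is a finite Borel measure on `S^{n-1}` whose support is not contained
in any closed hemisphere, `μ_j → μ` weakly, and `K_j` are convex bodies containing the origin
with `‖h_{K_j}‖_{φ,μ_j} = 1`, then the maximal radii of the `K_j` are uniformly bounded. -/
theorem uniform_radius_bound (n : ℕ) (φ : ℝ → ℝ)
    (hφc : ContinuousOn φ (Ici 0)) (hφm : StrictMonoOn φ (Ici 0))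
    (hφ0 : φ 0 = 0) (hφtop : Tendsto φ atTop atTop)
    (μ : Measure (Metric.sphere (0 : EuclideanSpace ℝ (Fin n)) 1)) [IsFiniteMeasure μ]
    (hμsupp : ∀ η : Metric.sphere (0 : EuclideanSpace ℝ (Fin n)) 1,
      0 < ∫ θ, max (inner ℝ (η : EuclideanSpace ℝ (Fin n)) (θ : EuclideanSpace ℝ (Fin n)) : ℝ) 0 ∂μ)
    (μseq : ℕ → Measure (Metric.sphere (0 : EuclideanSpace ℝ (Fin n)) 1))
    (hfin : ∀ j, IsFiniteMeasure (μseq j))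
    (hweak : ∀ f : C(Metric.sphere (0 : EuclideanSpace ℝ (Fin n)) 1, ℝ),
      Tendsto (fun j => ∫ x, f x ∂(μseq j)) atTop (nhds (∫ x, f x ∂μ)))
    (K : ℕ → Set (EuclideanSpace ℝ (Fin n)))
    (hKconv : ∀ j, Convex ℝ (K j)) (hKcomp : ∀ j, IsCompact (K j))
    (hKint : ∀ j, (interior (K j)).Nonempty)
    (h0K : ∀ j, (0 : EuclideanSpace ℝ (Fin n)) ∈ K j)
    (hnorm : ∀ j, orliczNorm n φ (μseq j) (fun u => suppFn n (K j) ↑u) = 1) :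
    ∃ R : ℝ, 0 < R ∧ ∀ j, ∀ x ∈ K j, ‖x‖ ≤ R := by
  by_cases hn : n = 0
  · subst hn
    refine ⟨1, one_pos, fun j x hx => ?_⟩
    have hx0 : ‖x‖ = 0 := by
      rw [EuclideanSpace.norm_eq]; simp
    simp [hx0]
  -- basic facts about φ
  have hφmono : ∀ {a b : ℝ}, 0 ≤ a → a ≤ b → φ a ≤ φ b := by
    intro a b ha hab
    exact hφm.monotoneOn ha (ha.trans hab) hab
  have hφnonneg : ∀ {a : ℝ}, 0 ≤ a → 0 ≤ φ a := by
    intro a ha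
    have := hφmono (le_refl (0:ℝ)) ha
    rwa [hφ0] at this
  have hφ1 : 0 ≤ φ 1 := hφnonneg zero_le_one
  -- nonempty sphere
  haveI hSne : Nonempty (Metric.sphere (0 : EuclideanSpace ℝ (Fin n)) 1) := by
    refine ⟨⟨EuclideanSpace.single ⟨0, Nat.pos_of_ne_zero hn⟩ (1:ℝ), ?_⟩⟩
    simp [mem_sphere_zero_iff_norm, EuclideanSpace.norm_single]
  have hnorm1 : ∀ u : Metric.sphere (0 : EuclideanSpace ℝ (Fin n)) 1,
      ‖(u : EuclideanSpace ℝ (Fin n))‖ = 1 := fun u => mem_sphere_zero_iff_norm.mp u.2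
  have habs : ∀ v u : Metric.sphere (0 : EuclideanSpace ℝ (Fin n)) 1,
      |(inner ℝ (v : EuclideanSpace ℝ (Fin n)) (u : EuclideanSpace ℝ (Fin n)) : ℝ)| ≤ 1 := by
    intro v u
    have := abs_real_inner_le_norm (v : EuclideanSpace ℝ (Fin n)) (u : EuclideanSpace ℝ (Fin n))
    rwa [hnorm1 v, hnorm1 u, one_mul] at this
  -- continuity of G
  set G : Metric.sphere (0 : EuclideanSpace ℝ (Fin n)) 1 → ℝ := fun v =>
    ∫ u, max (inner ℝ (v : EuclideanSpace ℝ (Fin n)) (u : EuclideanSpace ℝ (Fin n)) : ℝ) 0 ∂μ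
    with hGdef
  have hGcont : Continuous G := by
    apply MeasureTheory.continuous_of_dominated (bound := fun _ => (1:ℝ))
    · intro v
      exact ((continuous_const.inner continuous_subtype_val).max
        continuous_const).aestronglyMeasurable
    · intro v
      filter_upwards with u
      rw [Real.norm_eq_abs, abs_of_nonneg (le_max_right _ _)]
      exact max_le (le_of_abs_le (habs v u)) zero_le_one
    · exact integrable_const 1
    · filter_upwards with u
      exact (continuous_subtype_val.inner continuous_const).max continuous_const
  obtain ⟨v₀, -, hv₀⟩ := isCompact_univ.exists_isMinOn univ_nonempty hGcont.continuousOn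
  set ε₀ : ℝ := G v₀ with hε₀def
  have hε₀ : 0 < ε₀ := hμsupp v₀
  have hεmin : ∀ v, ε₀ ≤ G v := fun v => hv₀ (mem_univ v)
  set mS : ℝ := (μ univ).toReal with hmSdef
  have hmS : 0 ≤ mS := ENNReal.toReal_nonneg
  set δ : ℝ := ε₀ / (2 * (mS + 1)) with hδdef
  have hδpos : 0 < δ := by positivity
  -- claim 1 : uniform lower bound for the limit measure
  have claim1 : ∀ v : Metric.sphere (0 : EuclideanSpace ℝ (Fin n)) 1,
      ε₀ / 2 ≤ ∫ u, max ((inner ℝ (v : EuclideanSpace ℝ (Fin n))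
        (u : EuclideanSpace ℝ (Fin n)) : ℝ) - δ) 0 ∂μ := by
    intro v
    have hint1 : Integrable (fun u : Metric.sphere (0 : EuclideanSpace ℝ (Fin n)) 1 =>
        max (inner ℝ (v : EuclideanSpace ℝ (Fin n)) (u : EuclideanSpace ℝ (Fin n)) : ℝ) 0) μ :=
      cont_integrable μ ((continuous_const.inner continuous_subtype_val).max continuous_const)
    have hint2 : Integrable (fun u : Metric.sphere (0 : EuclideanSpace ℝ (Fin n)) 1 =>
        max ((inner ℝ (v : EuclideanSpace ℝ (Fin n)) (u : EuclideanSpace ℝ (Fin n)) : ℝ) - δ) 0) μ :=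
      cont_integrable μ (((continuous_const.inner continuous_subtype_val).sub
        continuous_const).max continuous_const)
    have step1 : ∫ u, ((max (inner ℝ (v : EuclideanSpace ℝ (Fin n))
        (u : EuclideanSpace ℝ (Fin n)) : ℝ) 0) - δ) ∂μ ≤
        ∫ u, max ((inner ℝ (v : EuclideanSpace ℝ (Fin n))
        (u : EuclideanSpace ℝ (Fin n)) : ℝ) - δ) 0 ∂μ := by
      apply integral_mono (hint1.sub (integrable_const δ)) hint2
      intro u
      simp only [Pi.sub_apply]
      rw [sub_le_iff_le_add]
      refine max_le ?_ ?_
      · have := le_max_left ((inner ℝ (v : EuclideanSpace ℝ (Fin n))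
          (u : EuclideanSpace ℝ (Fin n)) : ℝ) - δ) 0
        linarith
      · have := le_max_right ((inner ℝ (v : EuclideanSpace ℝ (Fin n))
          (u : EuclideanSpace ℝ (Fin n)) : ℝ) - δ) 0
        linarith
    have step2 : ∫ u, ((max (inner ℝ (v : EuclideanSpace ℝ (Fin n))
        (u : EuclideanSpace ℝ (Fin n)) : ℝ) 0) - δ) ∂μ = G v - mS * δ := by
      rw [integral_sub hint1 (integrable_const δ), integral_const, smul_eq_mul, measureReal_def]
    have step3 : mS * δ ≤ ε₀ / 2 := by
      rw [hδdef, mul_div_assoc', div_le_div_iff₀ (by positivity) two_pos]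
      nlinarith
    have := hεmin v
    linarith [step1, step2 ▸ step1]
  -- the finite net
  set δ' : ℝ := ε₀ / (8 * (mS + 2)) with hδ'def
  have hδ'pos : 0 < δ' := by positivity
  obtain ⟨t, ht⟩ := isCompact_univ.elim_finite_subcover
    (fun v : Metric.sphere (0 : EuclideanSpace ℝ (Fin n)) 1 => Metric.ball v δ')
    (fun v => Metric.isOpen_ball)
    (fun v _ => mem_iUnion.mpr ⟨v, Metric.mem_ball_self hδ'pos⟩)
  -- eventual mass bound
  have hmass : Tendsto (fun j => ((μseq j) univ).toReal) atTop (nhds mS) := by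
    have h := hweak (ContinuousMap.const _ (1:ℝ))
    simp only [ContinuousMap.const_apply, integral_const, smul_eq_mul, mul_one] at h
    exact h
  have hEmass : ∀ᶠ j in atTop, ((μseq j) univ).toReal ≤ mS + 1 :=
    hmass.eventually_le_const (lt_add_one mS)
  -- eventual net bound
  have hEnet : ∀ᶠ j in atTop, ∀ v' ∈ t,
      ε₀ * 3 / 8 ≤ ∫ u, max ((inner ℝ (v' : EuclideanSpace ℝ (Fin n))
        (u : EuclideanSpace ℝ (Fin n)) : ℝ) - δ) 0 ∂(μseq j) := by
    rw [eventually_all_finset]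
    intro v' _
    have hcm : Continuous (fun u : Metric.sphere (0 : EuclideanSpace ℝ (Fin n)) 1 =>
        max ((inner ℝ (v' : EuclideanSpace ℝ (Fin n)) (u : EuclideanSpace ℝ (Fin n)) : ℝ) - δ) 0) :=
      ((continuous_const.inner continuous_subtype_val).sub continuous_const).max continuous_const
    have h := hweak ⟨_, hcm⟩
    simp only [ContinuousMap.coe_mk] at h
    refine h.eventually_const_le ?_
    have := claim1 v'
    linarith
  obtain ⟨N, hN⟩ := eventually_atTop.mp (hEmass.and hEnet)
  -- threshold from φ → ∞
  set B : ℝ := φ 1 * (mS + 1) * 4 / ε₀ with hBdef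
  obtain ⟨T, hT⟩ := eventually_atTop.mp (hφtop.eventually_ge_atTop (B + 1))
  set T' : ℝ := max T 1 with hT'def
  have hT'pos : (0:ℝ) < T' := lt_of_lt_of_le one_pos (le_max_right T 1)
  set R₀ : ℝ := 2 * T' / δ with hR₀def
  have hR₀pos : 0 < R₀ := by positivity
  -- main bound for large j
  have key : ∀ j, N ≤ j → ∀ x ∈ K j, ‖x‖ ≤ R₀ := by
    intro j hj x hx
    haveI := hfin j
    have hm : ((μseq j) univ).toReal ≤ mS + 1 := (hN j hj).1
    have hmj0 : (0:ℝ) ≤ ((μseq j) univ).toReal := ENNReal.toReal_nonneg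
    by_cases hx0 : x = 0
    · rw [hx0]; simpa using hR₀pos.le
    have hr : 0 < ‖x‖ := norm_pos_iff.mpr hx0
    set v : Metric.sphere (0 : EuclideanSpace ℝ (Fin n)) 1 :=
      ⟨‖x‖⁻¹ • x, by
        rw [mem_sphere_zero_iff_norm, norm_smul, norm_inv, norm_norm,
          inv_mul_cancel₀ (norm_ne_zero_iff.mpr hx0)]⟩ with hvdef
    have hxv : x = ‖x‖ • (v : EuclideanSpace ℝ (Fin n)) := (smul_inv_smul₀ hr.ne' x).symm
    -- claim 2 : lower bound for the j-th integral at v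
    have claim2 : ε₀ / 4 ≤ ∫ u, max ((inner ℝ (v : EuclideanSpace ℝ (Fin n))
        (u : EuclideanSpace ℝ (Fin n)) : ℝ) - δ) 0 ∂(μseq j) := by
      obtain ⟨v', hv't, hvball⟩ := mem_iUnion₂.mp (ht (mem_univ v))
      have hdist : dist v v' < δ' := Metric.mem_ball.mp hvball
      have hint_v : Integrable (fun u : Metric.sphere (0 : EuclideanSpace ℝ (Fin n)) 1 =>
          max ((inner ℝ (v : EuclideanSpace ℝ (Fin n)) (u : EuclideanSpace ℝ (Fin n)) : ℝ) - δ) 0)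
          (μseq j) :=
        cont_integrable _ (((continuous_const.inner continuous_subtype_val).sub
          continuous_const).max continuous_const)
      have hint_v' : Integrable (fun u : Metric.sphere (0 : EuclideanSpace ℝ (Fin n)) 1 =>
          max ((inner ℝ (v' : EuclideanSpace ℝ (Fin n)) (u : EuclideanSpace ℝ (Fin n)) : ℝ) - δ) 0)
          (μseq j) :=
        cont_integrable _ (((continuous_const.inner continuous_subtype_val).sub
          continuous_const).max continuous_const)
      have hdiff : |∫ u, max ((inner ℝ (v : EuclideanSpace ℝ (Fin n))
          (u : EuclideanSpace ℝ (Fin n)) : ℝ) - δ) 0 ∂(μseq j) -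
          ∫ u, max ((inner ℝ (v' : EuclideanSpace ℝ (Fin n))
          (u : EuclideanSpace ℝ (Fin n)) : ℝ) - δ) 0 ∂(μseq j)| ≤
          δ' * ((μseq j) univ).toReal := by
        rw [← integral_sub hint_v hint_v']
        have hb : ∀ u : Metric.sphere (0 : EuclideanSpace ℝ (Fin n)) 1,
            |max ((inner ℝ (v : EuclideanSpace ℝ (Fin n)) (u : EuclideanSpace ℝ (Fin n)) : ℝ) - δ) 0 -
             max ((inner ℝ (v' : EuclideanSpace ℝ (Fin n)) (u : EuclideanSpace ℝ (Fin n)) : ℝ) - δ) 0|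
             ≤ δ' := by
          intro u
          have h1 := abs_max_sub_max_le_abs
            ((inner ℝ (v : EuclideanSpace ℝ (Fin n)) (u : EuclideanSpace ℝ (Fin n)) : ℝ) - δ)
            ((inner ℝ (v' : EuclideanSpace ℝ (Fin n)) (u : EuclideanSpace ℝ (Fin n)) : ℝ) - δ) 0
          have h2 : ((inner ℝ (v : EuclideanSpace ℝ (Fin n)) (u : EuclideanSpace ℝ (Fin n)) : ℝ) - δ)
              - ((inner ℝ (v' : EuclideanSpace ℝ (Fin n)) (u : EuclideanSpace ℝ (Fin n)) : ℝ) - δ)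
              = (inner ℝ ((v : EuclideanSpace ℝ (Fin n)) - (v' : EuclideanSpace ℝ (Fin n)))
                (u : EuclideanSpace ℝ (Fin n)) : ℝ) := by
            rw [inner_sub_left]; ring
          have h3 : |(inner ℝ ((v : EuclideanSpace ℝ (Fin n)) - (v' : EuclideanSpace ℝ (Fin n)))
              (u : EuclideanSpace ℝ (Fin n)) : ℝ)| ≤
              ‖(v : EuclideanSpace ℝ (Fin n)) - (v' : EuclideanSpace ℝ (Fin n))‖ := by
            have := abs_real_inner_le_norm
              ((v : EuclideanSpace ℝ (Fin n)) - (v' : EuclideanSpace ℝ (Fin n)))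
              (u : EuclideanSpace ℝ (Fin n))
            rwa [hnorm1 u, mul_one] at this
          have h4 : ‖(v : EuclideanSpace ℝ (Fin n)) - (v' : EuclideanSpace ℝ (Fin n))‖ ≤ δ' := by
            rw [← dist_eq_norm, ← Subtype.dist_eq]
            exact hdist.le
          calc |max _ 0 - max _ 0| ≤ _ := h1
            _ ≤ δ' := by rw [h2] at h1 ⊢; exact h3.trans h4
        calc |∫ u, (max ((inner ℝ (v : EuclideanSpace ℝ (Fin n))
              (u : EuclideanSpace ℝ (Fin n)) : ℝ) - δ) 0 -
              max ((inner ℝ (v' : EuclideanSpace ℝ (Fin n))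
              (u : EuclideanSpace ℝ (Fin n)) : ℝ) - δ) 0) ∂(μseq j)|
            ≤ ∫ u, |max ((inner ℝ (v : EuclideanSpace ℝ (Fin n))
              (u : EuclideanSpace ℝ (Fin n)) : ℝ) - δ) 0 -
              max ((inner ℝ (v' : EuclideanSpace ℝ (Fin n))
              (u : EuclideanSpace ℝ (Fin n)) : ℝ) - δ) 0| ∂(μseq j) := by
              simpa [Real.norm_eq_abs] using norm_integral_le_integral_norm
                (μ := μseq j) (fun u : Metric.sphere (0 : EuclideanSpace ℝ (Fin n)) 1 =>
                  max ((inner ℝ (v : EuclideanSpace ℝ (Fin n))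
                  (u : EuclideanSpace ℝ (Fin n)) : ℝ) - δ) 0 -
                  max ((inner ℝ (v' : EuclideanSpace ℝ (Fin n))
                  (u : EuclideanSpace ℝ (Fin n)) : ℝ) - δ) 0)
          _ ≤ ∫ _u, δ' ∂(μseq j) := by
              apply integral_mono ((hint_v.sub hint_v').abs) (integrable_const δ')
              intro u
              exact hb u
          _ = δ' * ((μseq j) univ).toReal := by rw [integral_const, smul_eq_mul, mul_comm, measureReal_def]
      have hnet := (hN j hj).2 v' hv't
      have hsmall : δ' * ((μseq j) univ).toReal ≤ ε₀ / 8 := by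
        have h5 : δ' * ((μseq j) univ).toReal ≤ δ' * (mS + 1) :=
          mul_le_mul_of_nonneg_left hm hδ'pos.le
        have h6 : δ' * (mS + 1) ≤ ε₀ / 8 := by
          rw [hδ'def, div_mul_eq_mul_div, div_le_div_iff₀ (by positivity) (by norm_num : (0:ℝ) < 8)]
          nlinarith
        linarith
      have := (abs_le.mp hdiff).1
      linarith
    -- cap set and its mass
    set A : Set (Metric.sphere (0 : EuclideanSpace ℝ (Fin n)) 1) :=
      {u | δ ≤ (inner ℝ (v : EuclideanSpace ℝ (Fin n)) (u : EuclideanSpace ℝ (Fin n)) : ℝ)}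
      with hAdef
    have hA : MeasurableSet A :=
      measurableSet_le measurable_const
        (continuous_const.inner continuous_subtype_val).measurable
    have hcap : ε₀ / 4 ≤ ((μseq j) A).toReal := by
      have hint_v : Integrable (fun u : Metric.sphere (0 : EuclideanSpace ℝ (Fin n)) 1 =>
          max ((inner ℝ (v : EuclideanSpace ℝ (Fin n)) (u : EuclideanSpace ℝ (Fin n)) : ℝ) - δ) 0)
          (μseq j) :=
        cont_integrable _ (((continuous_const.inner continuous_subtype_val).sub
          continuous_const).max continuous_const)
      have hmono : ∫ u, max ((inner ℝ (v : EuclideanSpace ℝ (Fin n))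
          (u : EuclideanSpace ℝ (Fin n)) : ℝ) - δ) 0 ∂(μseq j) ≤
          ∫ u, A.indicator (fun _ => (1:ℝ)) u ∂(μseq j) := by
        apply integral_mono hint_v ((integrable_const (1:ℝ)).indicator hA)
        intro u
        by_cases hu : u ∈ A
        · rw [indicator_of_mem hu]
          refine max_le ?_ zero_le_one
          have := le_of_abs_le (habs v u)
          linarith
        · rw [indicator_of_notMem hu]
          have hu' : (inner ℝ (v : EuclideanSpace ℝ (Fin n)) (u : EuclideanSpace ℝ (Fin n)) : ℝ) < δ :=
            lt_of_not_ge hu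
          exact le_of_eq (max_eq_right (by linarith))
      rw [integral_indicator_const (1:ℝ) hA, smul_eq_mul, mul_one, measureReal_def] at hmono
      linarith [claim2]
    -- extract a good lambda from the Orlicz norm condition
    obtain ⟨lam, hmem, hlam2⟩ : ∃ lam, (0 < lam ∧
        ∫ u, φ ((fun u : Metric.sphere (0 : EuclideanSpace ℝ (Fin n)) 1 =>
          suppFn n (K j) ↑u) u / lam) ∂(μseq j) ≤
          φ 1 * ((μseq j) univ).toReal) ∧ lam < 2 := by
      have h1 := hnorm j
      unfold orliczNorm at h1
      have hSetne : {lam : ℝ | 0 < lam ∧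
          ∫ u, φ ((fun u : Metric.sphere (0 : EuclideanSpace ℝ (Fin n)) 1 =>
          suppFn n (K j) ↑u) u / lam) ∂(μseq j) ≤
          φ 1 * ((μseq j) univ).toReal}.Nonempty := by
        by_contra hc
        rw [not_nonempty_iff_eq_empty] at hc
        rw [hc, Real.sInf_empty] at h1
        norm_num at h1
      by_contra hc
      push_neg at hc
      have h2 : (2:ℝ) ≤ sInf {lam : ℝ | 0 < lam ∧
          ∫ u, φ ((fun u : Metric.sphere (0 : EuclideanSpace ℝ (Fin n)) 1 =>
          suppFn n (K j) ↑u) u / lam) ∂(μseq j) ≤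
          φ 1 * ((μseq j) univ).toReal} :=
        le_csInf hSetne (fun b hb => hc b hb)
      rw [h1] at h2
      norm_num at h2
    obtain ⟨hlam0, hlamint⟩ := hmem
    simp only at hlamint
    -- integrability of the composed function
    have hfcont : Continuous (fun u : Metric.sphere (0 : EuclideanSpace ℝ (Fin n)) 1 =>
        suppFn n (K j) ↑u) :=
      (suppFn_continuous (hKcomp j) (h0K j)).comp continuous_subtype_val
    have hf0 : ∀ u : Metric.sphere (0 : EuclideanSpace ℝ (Fin n)) 1,
        0 ≤ suppFn n (K j) ↑u := fun u => suppFn_nonneg (hKcomp j) (h0K j) _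
    have hφint : Integrable (fun u : Metric.sphere (0 : EuclideanSpace ℝ (Fin n)) 1 =>
        φ (suppFn n (K j) ↑u / lam)) (μseq j) := by
      apply cont_integrable
      exact hφc.comp_continuous (hfcont.div_const lam)
        (fun u => div_nonneg (hf0 u) hlam0.le)
    -- the main chain of inequalities
    set c : ℝ := φ (‖x‖ * δ / 2) with hcdef
    have hc0 : 0 ≤ c := hφnonneg (by positivity)
    have hchain : c * ((μseq j) A).toReal ≤ φ 1 * ((μseq j) univ).toReal := by
      have h3 : ∫ u, A.indicator (fun _ => c) u ∂(μseq j) ≤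
          ∫ u, φ (suppFn n (K j) ↑u / lam) ∂(μseq j) := by
        apply integral_mono_of_nonneg
        · filter_upwards with u
          exact indicator_nonneg (fun _ _ => hc0) u
        · exact hφint
        · filter_upwards with u
          by_cases hu : u ∈ A
          · rw [indicator_of_mem hu]
            apply hφmono (by positivity)
            have h5 := inner_le_suppFn (hKcomp j) hx ((u : EuclideanSpace ℝ (Fin n)))
            have h6 : (inner ℝ x (u : EuclideanSpace ℝ (Fin n)) : ℝ) =
                ‖x‖ * (inner ℝ (v : EuclideanSpace ℝ (Fin n)) (u : EuclideanSpace ℝ (Fin n)) : ℝ) := by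
              have h6' : (inner ℝ (‖x‖ • (v : EuclideanSpace ℝ (Fin n)))
                  (u : EuclideanSpace ℝ (Fin n)) : ℝ) =
                  ‖x‖ * (inner ℝ (v : EuclideanSpace ℝ (Fin n))
                  (u : EuclideanSpace ℝ (Fin n)) : ℝ) := real_inner_smul_left _ _ _
              rw [← hxv] at h6'
              exact h6'
            have hu' : δ ≤ (inner ℝ (v : EuclideanSpace ℝ (Fin n))
                (u : EuclideanSpace ℝ (Fin n)) : ℝ) := hu
            have h7 : ‖x‖ * δ ≤ suppFn n (K j) ↑u := by
              have := mul_le_mul_of_nonneg_left hu' hr.le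
              rw [← h6] at this
              linarith
            calc ‖x‖ * δ / 2 ≤ ‖x‖ * δ / lam :=
                  div_le_div_of_nonneg_left (by positivity) hlam0 hlam2.le
              _ ≤ suppFn n (K j) ↑u / lam := (div_le_div_iff_of_pos_right hlam0).mpr h7
          · rw [indicator_of_notMem hu]
            exact hφnonneg (div_nonneg (hf0 u) hlam0.le)
      rw [integral_indicator_const c hA, smul_eq_mul, mul_comm, measureReal_def] at h3
      exact h3.trans hlamint
    -- conclude via the threshold
    by_contra hcon
    push_neg at hcon
    have h7 : T' ≤ ‖x‖ * δ / 2 := by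
      rw [hR₀def] at hcon
      rw [div_lt_iff₀ hδpos] at hcon
      linarith
    have h8 : B + 1 ≤ c := hT _ ((le_max_left T 1).trans h7)
    have h9 : c * (ε₀ / 4) ≤ φ 1 * (mS + 1) := by
      have := mul_le_mul_of_nonneg_left hcap hc0
      have h10 : φ 1 * ((μseq j) univ).toReal ≤ φ 1 * (mS + 1) :=
        mul_le_mul_of_nonneg_left hm hφ1
      linarith
    have hBe : B * ε₀ = φ 1 * (mS + 1) * 4 := div_mul_cancel₀ _ hε₀.ne'
    nlinarith [mul_le_mul_of_nonneg_right h8 (le_of_lt (by positivity : (0:ℝ) < ε₀ / 4))]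
  -- combine with individual bounds for small j
  choose Bd hBd using fun j => (hKcomp j).isBounded.exists_norm_le
  set C : ℝ := (((Finset.range N).sup fun j => ⌈Bd j⌉₊ : ℕ) : ℝ) with hCdef
  have hC0 : 0 ≤ C := Nat.cast_nonneg _
  refine ⟨max R₀ C + 1, by
    have := le_max_left R₀ C
    linarith, fun j x hx => ?_⟩
  rcases le_or_gt N j with hj | hj
  · have := key j hj x hx
    have := le_max_left R₀ C
    linarith
  · have h1 : ‖x‖ ≤ Bd j := hBd j x hx
    have h2 : ((⌈Bd j⌉₊ : ℕ) : ℝ) ≤ C := by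
      rw [hCdef]
      exact Nat.cast_le.mpr (Finset.le_sup (f := fun j => ⌈Bd j⌉₊) (Finset.mem_range.mpr hj))
    have h3 : Bd j ≤ (⌈Bd j⌉₊ : ℝ) := Nat.le_ceil _
    have := le_max_right R₀ C
    linarith
end
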